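/- Monotonicity of Bloom filter false positives: for fixed m ≥ 1 and k ≥ 1, the false-positive probability p_{k,n,m} = m^{−k(n+1)} Σ_{i=1}^m i^k · i! · C(m,i) · S(kn,i) is monotonically non-decreasing in the number n of stored elements. -/
import Mathlib


/-- Stirling numbers of the second kind. -/
def stirling2 : ℕ → ℕ → ℕ
  | 0, 0 => 1
  | 0, _ + 1 => 0
  | _ + 1, 0 => 0
  | n + 1, k + 1 => (k + 1) * stirling2 n (k + 1) + stirling2 n k

/-- The Bloom filter false-positive probability
`p_{k,n,m} = m^{-k(n+1)} Σ_{i=1}^m i^k · i! · C(m,i) · S(kn,i)`. -/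
noncomputable def bloomFP (k n m : ℕ) : ENNReal :=
  ((∑ i ∈ Finset.Icc 1 m,
      i ^ k * i.factorial * m.choose i * stirling2 (k * n) i : ℕ) : ENNReal) /
    ((m : ENNReal) ^ (k * (n + 1)))

/-- The numerator sum as a function of `t = k * n`. -/
def S2sum (k m t : ℕ) : ℕ :=
  ∑ i ∈ Finset.Icc 1 m, i ^ k * i.factorial * m.choose i * stirling2 t i

lemma S2sum_range (k m t : ℕ) :
    S2sum k m t = ∑ j ∈ Finset.range m,
      (j + 1) ^ k * (j + 1).factorial * m.choose (j + 1) * stirling2 t (j + 1) := by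
  unfold S2sum
  rw [← Finset.Ico_add_one_right_eq_Icc, Finset.sum_Ico_eq_sum_range]
  exact Finset.sum_congr (by norm_num) fun j _ => by rw [Nat.add_comm 1 j]

lemma coeff_succ (m j : ℕ) :
    (j + 2).factorial * m.choose (j + 2) =
      (m - (j + 1)) * ((j + 1).factorial * m.choose (j + 1)) := by
  have h := Nat.choose_succ_right_eq m (j + 1)
  calc (j + 2).factorial * m.choose (j + 2)
      = (j + 1).factorial * (m.choose (j + 2) * (j + 2)) := by
        rw [Nat.factorial_succ]; ring
    _ = (j + 1).factorial * (m.choose (j + 1) * (m - (j + 1))) := by rw [h]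
    _ = _ := by ring

lemma key_step (k m t : ℕ) (hk : 1 ≤ k) (hm : 1 ≤ m) :
    m * S2sum k m t ≤ S2sum k m (t + 1) := by
  -- abbreviate the coefficient
  set g : ℕ → ℕ := fun j => (j + 1) ^ k * (j + 1).factorial * m.choose (j + 1) with hg
  have hrange : ∀ t, S2sum k m t = ∑ j ∈ Finset.range m, g j * stirling2 t (j + 1) := by
    intro t
    rw [S2sum_range]
  rw [hrange, hrange]
  have hrec : ∀ j, stirling2 (t + 1) (j + 1) =
      (j + 1) * stirling2 t (j + 1) + stirling2 t j := fun j => rfl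
  have hsplit : ∑ j ∈ Finset.range m, g j * stirling2 (t + 1) (j + 1)
      = (∑ j ∈ Finset.range m, (j + 1) * (g j * stirling2 t (j + 1)))
        + ∑ j ∈ Finset.range m, g j * stirling2 t j := by
    rw [← Finset.sum_add_distrib]
    apply Finset.sum_congr rfl
    intro j _
    rw [hrec j]
    ring
  rw [hsplit, Finset.mul_sum]
  -- split m = (j+1) + (m - 1 - j) for j < m
  have hLHS : ∑ j ∈ Finset.range m, m * (g j * stirling2 t (j + 1))
      = (∑ j ∈ Finset.range m, (j + 1) * (g j * stirling2 t (j + 1)))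
        + ∑ j ∈ Finset.range m, (m - 1 - j) * (g j * stirling2 t (j + 1)) := by
    rw [← Finset.sum_add_distrib]
    apply Finset.sum_congr rfl
    intro j hj
    have hj' : j + 1 ≤ m := Finset.mem_range.mp hj
    rw [← Nat.add_mul]
    congr 1
    omega
  rw [hLHS]
  apply Nat.add_le_add_left
  -- show ∑ (m-1-j) * g j * s t (j+1) ≤ ∑ g j * s t j
  obtain ⟨m', rfl⟩ : ∃ m', m = m' + 1 := ⟨m - 1, by omega⟩
  rw [Finset.sum_range_succ, Finset.sum_range_succ']
  have hlast : (m' + 1 - 1 - m') * (g m' * stirling2 t (m' + 1)) = 0 := by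
    simp
  rw [hlast, add_zero]
  refine le_trans (Finset.sum_le_sum ?_) (Nat.le_add_right _ _)
  intro j hj
  have hj' : j < m' := Finset.mem_range.mp hj
  -- (m'-j) * g j ≤ g (j+1), both multiplied by stirling2 t (j+1)
  have h1 : (m' + 1 - 1 - j) * g j ≤ g (j + 1) := by
    have hc : g (j + 1) = (j + 2) ^ k * ((m' + 1 - (j + 1)) *
        ((j + 1).factorial * (m' + 1).choose (j + 1))) := by
      simp only [hg]
      rw [mul_assoc, coeff_succ]
    rw [hc]
    have hpow : (j + 1) ^ k ≤ (j + 2) ^ k := Nat.pow_le_pow_left (by omega) k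
    have : (m' + 1 - 1 - j) * g j
        = (j + 1) ^ k * ((m' + 1 - (j + 1)) *
          ((j + 1).factorial * (m' + 1).choose (j + 1))) := by
      simp only [hg]
      have : m' + 1 - 1 - j = m' + 1 - (j + 1) := by omega
      rw [this]
      ring
    rw [this]
    exact Nat.mul_le_mul_right _ hpow
  calc (m' + 1 - 1 - j) * (g j * stirling2 t (j + 1))
      = ((m' + 1 - 1 - j) * g j) * stirling2 t (j + 1) := by ring
    _ ≤ g (j + 1) * stirling2 t (j + 1) := Nat.mul_le_mul_right _ h1

lemma key_pow (k m : ℕ) (hk : 1 ≤ k) (hm : 1 ≤ m) (c t : ℕ) :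
    m ^ c * S2sum k m t ≤ S2sum k m (t + c) := by
  induction c generalizing t with
  | zero => simp
  | succ c ih =>
    calc m ^ (c + 1) * S2sum k m t = m ^ c * (m * S2sum k m t) := by ring
      _ ≤ m ^ c * S2sum k m (t + 1) := Nat.mul_le_mul_left _ (key_step k m t hk hm)
      _ ≤ S2sum k m (t + 1 + c) := ih (t + 1)
      _ = S2sum k m (t + (c + 1)) := by ring_nf

/-- For fixed `m ≥ 1` and `k ≥ 1`, the Bloom filter false-positive probability
is monotonically non-decreasing in the number `n` of stored elements. -/
theorem bloomFP_monotone (m k : ℕ) (hm : 1 ≤ m) (hk : 1 ≤ k) :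
    Monotone (fun n => bloomFP k n m) := by
  apply monotone_nat_of_le_succ
  intro n
  have hnum : m ^ k * S2sum k m (k * n) ≤ S2sum k m (k * (n + 1)) := by
    have h := key_pow k m hk hm k (k * n)
    have : k * n + k = k * (n + 1) := by ring
    rwa [this] at h
  have hm0 : (m : ENNReal) ≠ 0 := by
    exact_mod_cast Nat.one_le_iff_ne_zero.mp hm
  have hmk0 : ((m : ENNReal) ^ k) ≠ 0 := pow_ne_zero _ hm0
  have hmktop : ((m : ENNReal) ^ k) ≠ ⊤ := by
    exact ENNReal.pow_ne_top (ENNReal.natCast_ne_top m)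
  show bloomFP k n m ≤ bloomFP k (n + 1) m
  unfold bloomFP
  have hnumdef : ∀ n, (∑ i ∈ Finset.Icc 1 m,
      i ^ k * i.factorial * m.choose i * stirling2 (k * n) i : ℕ) = S2sum k m (k * n) :=
    fun _ => rfl
  rw [hnumdef, hnumdef]
  calc (S2sum k m (k * n) : ENNReal) / (m : ENNReal) ^ (k * (n + 1))
      = (S2sum k m (k * n) : ENNReal) * (m : ENNReal) ^ k /
          ((m : ENNReal) ^ (k * (n + 1)) * (m : ENNReal) ^ k) :=
        (ENNReal.mul_div_mul_right _ _ hmk0 hmktop).symm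
    _ ≤ (S2sum k m (k * (n + 1)) : ENNReal) / ((m : ENNReal) ^ (k * (n + 1 + 1))) := by
        have hexp : (m : ENNReal) ^ (k * (n + 1)) * (m : ENNReal) ^ k
            = (m : ENNReal) ^ (k * (n + 1 + 1)) := by
          have he : k * (n + 1) + k = k * (n + 1 + 1) := by ring
          rw [← pow_add, he]
        rw [hexp]
        apply ENNReal.div_le_div_right
        rw [mul_comm]
        exact_mod_cast hnum
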